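/- If the full automorphism group of a Hamiltonian cycle system of order 2n+1 has even order, then either it contains a unique involution (i.e., it is a binary group), or 2n+1 is prime and the full automorphism group is isomorphic to AGL(1, 2n+1). -/

import Mathlib

open Pointwise

variable {V : Type*}

/-- The action of a permutation on a simple graph by relabelling vertices. -/
instance permGraphAction : MulAction (Equiv.Perm V) (SimpleGraph V) where
  smul σ H := H.map σ.toEmbedding
  one_smul H := by
    show H.map (1 : Equiv.Perm V).toEmbedding = H
    ext a b
    simp [SimpleGraph.map_adj]
  mul_smul σ τ H := by
    ext a b
    show (H.map (σ * τ).toEmbedding).Adj a b ↔ ((H.map τ.toEmbedding).map σ.toEmbedding).Adj a b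
    simp only [SimpleGraph.map_adj, Equiv.coe_toEmbedding, Equiv.Perm.coe_mul,
      Function.comp_apply]
    rw [SimpleGraph.map_map]

lemma perm_smul_graph (σ : Equiv.Perm V) (H : SimpleGraph V) :
    σ • H = H.map σ.toEmbedding := rfl

/-- A Hamiltonian cycle of the complete graph on `V`: a connected, 2-regular
(spanning) subgraph. -/
def IsHamCycle [Fintype V] (H : SimpleGraph V) : Prop :=
  H.Connected ∧ ∀ v : V, (H.neighborSet v).ncard = 2

/-- A Hamiltonian cycle system: a set of Hamiltonian cycles whose edge sets
partition the edge set of the complete graph. -/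
def IsHCS [Fintype V] (𝓗 : Set (SimpleGraph V)) : Prop :=
  (∀ H ∈ 𝓗, IsHamCycle H) ∧
    ∀ e ∈ (⊤ : SimpleGraph V).edgeSet, ∃! H, H ∈ 𝓗 ∧ e ∈ H.edgeSet

/-- The full automorphism group of a Hamiltonian cycle system, as the subgroup
of vertex permutations preserving the set of cycles. -/
def autHCS (𝓗 : Set (SimpleGraph V)) : Subgroup (Equiv.Perm V) :=
  MulAction.stabilizer (Equiv.Perm V) 𝓗

/-- The cycle graph traced by a map from `ZMod m` (consecutive residues are adjacent). -/
def cycleOn {W : Type*} (m : ℕ) (f : ZMod m → W) : SimpleGraph W :=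
  SimpleGraph.fromRel (fun a b => ∃ i : ZMod m, f i = a ∧ f (i + 1) = b)


lemma hcs_smul_adj (σ : Equiv.Perm V) (H : SimpleGraph V) (x y : V) :
    (σ • H).Adj x y ↔ H.Adj (σ⁻¹ x) (σ⁻¹ y) := by
  rw [perm_smul_graph]
  simp only [SimpleGraph.map_adj, Equiv.coe_toEmbedding]
  constructor
  · rintro ⟨-, u, v, h, rfl, rfl⟩
    simpa using h
  · intro h
    exact ⟨fun hxy => h.ne (by rw [hxy]), σ⁻¹ x, σ⁻¹ y, h, by simp, by simp⟩

lemma hcs_smul_adj' (σ : Equiv.Perm V) (H : SimpleGraph V) (x y : V) :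
    (σ • H).Adj (σ x) (σ y) ↔ H.Adj x y := by
  rw [hcs_smul_adj]; simp

lemma adj_of_smul_eq {σ : Equiv.Perm V} {H : SimpleGraph V} (h : σ • H = H) (x y : V) :
    H.Adj (σ x) (σ y) ↔ H.Adj x y := by
  conv_lhs => rw [← h]
  exact hcs_smul_adj' σ H x y

lemma pair_eq_of_ncard {α : Type*} {s : Set α} (h2 : s.ncard = 2) {a b : α} (ha : a ∈ s)
    (hb : b ∈ s) (hab : a ≠ b) : s = {a, b} := by
  obtain ⟨x, y, hxy, rfl⟩ := Set.ncard_eq_two.mp h2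
  simp only [Set.mem_insert_iff, Set.mem_singleton_iff] at ha hb
  rcases ha with rfl | rfl <;> rcases hb with rfl | rfl
  · exact absurd rfl hab
  · rfl
  · exact Set.pair_comm b a
  · exact absurd rfl hab

lemma hcs_closure_eq {H : SimpleGraph V} (hc : H.Connected) {C : Set V} {v0 : V}
    (h0 : v0 ∈ C) (hcl : ∀ x y, x ∈ C → H.Adj x y → y ∈ C) : ∀ v, v ∈ C := by
  have key : ∀ (u v : V) (_ : H.Walk u v), u ∈ C → v ∈ C := by
    intro u v w
    induction w with
    | nil => exact id
    | cons h p ih => intro hu; exact ih (hcl _ _ hu h)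
  intro v
  obtain ⟨w⟩ := hc.preconnected v0 v
  exact key _ _ w h0

lemma hcs_rigid {H : SimpleGraph V} (hc : H.Connected) (h2 : ∀ v, (H.neighborSet v).ncard = 2)
    {g : Equiv.Perm V} (hg : g • H = H) {u w : V} (huw : H.Adj u w)
    (hu : g u = u) (hw : g w = w) : ∀ z, g z = z := by
  have step : ∀ x y, H.Adj x y → g x = x → g y = y → ∀ z, H.Adj x z → g z = z := by
    intro x y hxy hgx hgy z hxz
    by_cases hzy : z = y
    · subst hzy; exact hgy
    · have hNz : g z ∈ H.neighborSet x := by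
        have h1 : H.Adj (g x) (g z) := (adj_of_smul_eq hg x z).mpr hxz
        rw [hgx] at h1
        exact h1
      have hN : H.neighborSet x = {y, z} :=
        pair_eq_of_ncard (h2 x) hxy hxz (fun hyz => hzy hyz.symm)
      rw [hN] at hNz
      rcases hNz with h1 | h1
      · exact absurd (g.injective (h1.trans hgy.symm)) hzy
      · exact h1
  have key : ∀ (a : V) (_ : H.Walk a u), g a = a ∧ ∃ y, H.Adj a y ∧ g y = y := by
    intro a p
    induction p with
    | nil => exact ⟨hu, w, huw, hw⟩
    | @cons x b c h p ih =>
      obtain ⟨hb, y, hby, hy⟩ := ih huw hu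
      exact ⟨step b y hby hb hy x h.symm, b, h, hb⟩
  intro z
  obtain ⟨p⟩ := hc.preconnected z u
  exact (key z p).1

open SimpleGraph in
lemma hcs_coords [Fintype V] {H : SimpleGraph V} (hc : H.Connected)
    (h2 : ∀ v, (H.neighborSet v).ncard = 2) :
    ∃ f : ZMod (Fintype.card V) → V, Function.Bijective f ∧
      ∀ i j, H.Adj (f i) (f j) ↔ (j = i + 1 ∨ i = j + 1) := by
  classical
  have hex : ∀ (q : {p : V × V // H.Adj p.1 p.2}), ∃ z, H.Adj q.1.2 z ∧ z ≠ q.1.1 ∧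
      ∀ y, H.Adj q.1.2 y → y ≠ q.1.1 → y = z := by
    rintro ⟨⟨u, w⟩, huw⟩
    obtain ⟨x, y, hxy, hN⟩ := Set.ncard_eq_two.mp (h2 w)
    have hu : u ∈ H.neighborSet w := (mem_neighborSet _ _ _).mpr huw.symm
    rw [hN] at hu
    simp only [Set.mem_insert_iff, Set.mem_singleton_iff] at hu
    have hyN : H.Adj w y := by
      have : y ∈ H.neighborSet w := by rw [hN]; simp
      exact (mem_neighborSet _ _ _).mp this
    have hxN : H.Adj w x := by
      have : x ∈ H.neighborSet w := by rw [hN]; simp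
      exact (mem_neighborSet _ _ _).mp this
    rcases hu with rfl | rfl
    · refine ⟨y, hyN, fun hyu => hxy hyu.symm, ?_⟩
      intro y' hy' hy'u
      have : y' ∈ H.neighborSet w := (mem_neighborSet _ _ _).mpr hy'
      rw [hN] at this
      simp only [Set.mem_insert_iff, Set.mem_singleton_iff] at this
      rcases this with rfl | rfl
      · exact absurd rfl hy'u
      · rfl
    · refine ⟨x, hxN, fun hxu => hxy hxu, ?_⟩
      intro y' hy' hy'u
      have : y' ∈ H.neighborSet w := (mem_neighborSet _ _ _).mpr hy'
      rw [hN] at this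
      simp only [Set.mem_insert_iff, Set.mem_singleton_iff] at this
      rcases this with rfl | rfl
      · rfl
      · exact absurd rfl hy'u
  choose nxt hnadj hnne hnuniq using hex
  -- starting edge
  have hV0 : Nonempty V := hc.nonempty
  obtain ⟨v0⟩ := hV0
  have hN0 : (H.neighborSet v0).Nonempty :=
    Set.nonempty_of_ncard_ne_zero (by rw [h2 v0]; exact two_ne_zero)
  obtain ⟨x0, hx0⟩ := hN0
  let step : {p : V × V // H.Adj p.1 p.2} → {p : V × V // H.Adj p.1 p.2} :=
    fun q => ⟨(q.1.2, nxt q), hnadj q⟩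
  have hstep1 : ∀ q, (step q).1.1 = q.1.2 := fun _ => rfl
  have hstep2 : ∀ q, (step q).1.2 = nxt q := fun _ => rfl
  have hstepinj : Function.Injective step := by
    rintro ⟨⟨u, w⟩, hq⟩ ⟨⟨u', w'⟩, hq'⟩ heq
    simp only [step, Subtype.mk.injEq, Prod.mk.injEq] at heq
    obtain ⟨hw, hnx⟩ := heq
    subst hw
    have hz := hnne ⟨(u, w), hq⟩
    have hz' := hnne ⟨(u', w), hq'⟩
    rw [← hnx] at hz'
    have hzadj := hnadj ⟨(u, w), hq⟩
    have hNw : H.neighborSet w = {u, nxt ⟨(u, w), hq⟩} :=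
      pair_eq_of_ncard (h2 w) ((mem_neighborSet _ _ _).mpr hq.symm)
        ((mem_neighborSet _ _ _).mpr hzadj) (fun h => hz h.symm)
    have hu' : u' ∈ H.neighborSet w := (mem_neighborSet _ _ _).mpr hq'.symm
    rw [hNw] at hu'
    simp only [Set.mem_insert_iff, Set.mem_singleton_iff] at hu'
    rcases hu' with rfl | rfl
    · rfl
    · exact absurd rfl hz'
  let it : ℕ → {p : V × V // H.Adj p.1 p.2} := fun k => step^[k] ⟨(v0, x0), hx0⟩
  have hit0 : it 0 = ⟨(v0, x0), hx0⟩ := rfl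
  have hitS : ∀ k, it (k + 1) = step (it k) := fun k =>
    Function.iterate_succ_apply' step k _
  have hitadd : ∀ a b, it (a + b) = step^[a] (it b) := fun a b =>
    Function.iterate_add_apply step a b _
  let F : ℕ → V := fun k => (it k).1.1
  have hF1 : ∀ k, F (k + 1) = (it k).1.2 := by
    intro k
    show (it (k + 1)).1.1 = (it k).1.2
    rw [hitS k, hstep1]
  have adjF : ∀ k, H.Adj (F k) (F (k + 1)) := by
    intro k; rw [hF1]; exact (it k).2
  have hF2 : ∀ k, F (k + 2) = nxt (it k) := by
    intro k
    show (it (k + 2)).1.1 = _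
    have : k + 2 = (k + 1) + 1 := rfl
    rw [this, hitS (k+1), hstep1, hitS k, hstep2]
  have nbF : ∀ k, F (k + 2) ≠ F k := by
    intro k; rw [hF2]; exact hnne (it k)
  have uniqF : ∀ k y, H.Adj (F (k + 1)) y → y ≠ F k → y = F (k + 2) := by
    intro k y hy hne
    rw [hF2]
    refine hnuniq (it k) y ?_ hne
    rwa [← hF1]
  have pairF : ∀ k, (it k).1 = (F k, F (k + 1)) := by
    intro k; rw [hF1]
  -- existence of a period
  have hperex : ∃ P, 0 < P ∧ it P = it 0 := by
    have key : ∀ a b : ℕ, a < b → it a = it b → ∃ P, 0 < P ∧ it P = it 0 := by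
      intro a b hab he
      refine ⟨b - a, by omega, ?_⟩
      apply hstepinj.iterate a
      have e1 : step^[a] (it (b - a)) = it b := by
        rw [← hitadd]
        congr 1
        omega
      rw [e1, ← he]
      exact (hitadd a 0).symm
    obtain ⟨a, b, hab, he⟩ := Finite.exists_ne_map_eq_of_infinite it
    rcases Ne.lt_or_gt hab with hlt | hlt
    · exact key a b hlt he
    · exact key b a hlt he.symm
  obtain ⟨per, hper0, hperit, hpermin⟩ :
      ∃ P, 0 < P ∧ it P = it 0 ∧ ∀ m, 0 < m → it m = it 0 → P ≤ m :=
    ⟨Nat.find hperex, (Nat.find_spec hperex).1, (Nat.find_spec hperex).2,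
      fun m hm1 hm2 => Nat.find_le ⟨hm1, hm2⟩⟩
  have itp : ∀ k, it (k + per) = it k := by
    intro k
    rw [hitadd k per, hperit, ← hitadd k 0, Nat.add_zero]
  have Fper : ∀ k, F (k + per) = F k :=
    fun k => congrArg (fun q : {p : V × V // H.Adj p.1 p.2} => q.1.1) (itp k)
  have Fmult : ∀ t k, F (k + per * t) = F k := by
    intro t
    induction t with
    | zero => simp
    | succ t ih =>
      intro k
      have e : k + per * (t + 1) = (k + per * t) + per := by ring
      rw [e, Fper, ih]
  have Fmod : ∀ a b : ℕ, a % per = b % per → F a = F b := by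
    intro a b hab
    have e1 : a = a % per + per * (a / per) := (Nat.mod_add_div a per).symm
    have e2 : b = b % per + per * (b / per) := (Nat.mod_add_div b per).symm
    rw [e1, Fmult, e2, Fmult, hab]
  have hne1 : per ≠ 1 := by
    intro h1
    rw [h1] at hperit
    have : F 1 = F 0 := congrArg (fun q : {p : V × V // H.Adj p.1 p.2} => q.1.1) hperit
    exact (adjF 0).ne' this
  have hne2 : per ≠ 2 := by
    intro h1
    rw [h1] at hperit
    have : F 2 = F 0 := congrArg (fun q : {p : V × V // H.Adj p.1 p.2} => q.1.1) hperit
    exact nbF 0 this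
  have h3per : 3 ≤ per := by omega
  haveI : NeZero per := ⟨by omega⟩
  let Fz : ZMod per → V := fun z => F z.val
  have hcastval : ∀ z : ZMod per, ((z.val : ℕ) : ZMod per) = z := fun z =>
    ZMod.natCast_rightInverse z
  have FzNat : ∀ a : ℕ, Fz ((a : ZMod per)) = F a := by
    intro a
    show F (((a : ZMod per)).val) = F a
    apply Fmod
    rw [ZMod.val_natCast]
    exact Nat.mod_mod_of_dvd a dvd_rfl
  have FzShift : ∀ (z : ZMod per) (a : ℕ), Fz (z + (a : ZMod per)) = F (z.val + a) := by
    intro z a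
    have e : z + (a : ZMod per) = ((z.val + a : ℕ) : ZMod per) := by
      rw [Nat.cast_add, hcastval z]
    rw [e, FzNat]
  have adjz : ∀ z : ZMod per, H.Adj (Fz z) (Fz (z + 1)) := by
    intro z
    have e : Fz (z + 1) = F (z.val + 1) := by
      rw [show (1 : ZMod per) = ((1 : ℕ) : ZMod per) by norm_cast, FzShift]
    rw [e]
    exact adjF z.val
  have nbz : ∀ z : ZMod per, Fz (z + 2) ≠ Fz z := by
    intro z
    have e : Fz (z + 2) = F (z.val + 2) := by
      rw [show (2 : ZMod per) = ((2 : ℕ) : ZMod per) by norm_cast, FzShift]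
    rw [e]
    exact nbF z.val
  have Nz : ∀ z : ZMod per, H.neighborSet (Fz (z + 1)) = {Fz z, Fz (z + 2)} := by
    intro z
    refine pair_eq_of_ncard (h2 _) ((mem_neighborSet _ _ _).mpr (adjz z).symm)
      ((mem_neighborSet _ _ _).mpr ?_) (Ne.symm (nbz z))
    have := adjz (z + 1)
    rwa [show z + 1 + 1 = z + 2 by ring] at this
  have hNear : ∀ z : ZMod per, H.neighborSet (Fz z) = {Fz (z - 1), Fz (z + 1)} := by
    intro z
    have := Nz (z - 1)
    rwa [show z - 1 + 1 = z by ring, show z - 1 + 2 = z + 1 by ring] at this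
  have hsurj : Function.Surjective Fz := by
    intro v
    refine hcs_closure_eq hc (C := Set.range Fz) ⟨0, rfl⟩ ?_ v
    rintro x y ⟨z, rfl⟩ hxy
    have : y ∈ H.neighborSet (Fz z) := (mem_neighborSet _ _ _).mpr hxy
    rw [hNear z] at this
    simp only [Set.mem_insert_iff, Set.mem_singleton_iff] at this
    rcases this with rfl | rfl
    · exact ⟨z - 1, rfl⟩
    · exact ⟨z + 1, rfl⟩
  have hinjkey : ∀ a b : ZMod per, a.val < b.val → (it a.val).1 = (it b.val).1 → False := by
    intro a b hab hit2
    have heq : it a.val = it b.val := Subtype.ext hit2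
    have e1 : step^[a.val] (it (b.val - a.val)) = it b.val := by
      rw [← hitadd]; congr 1; omega
    have h4 : it (b.val - a.val) = it 0 := by
      apply hstepinj.iterate a.val
      rw [e1, ← heq]
      exact (hitadd a.val 0).symm
    have h5 := hpermin (b.val - a.val) (by omega) h4
    have h6 : b.val < per := ZMod.val_lt b
    omega
  have hinj : Function.Injective Fz := by
    intro i j hij
    by_contra hne0
    have hvalne : i.val ≠ j.val := fun h => hne0 (by rw [← hcastval i, ← hcastval j, h])
    have hFzpair : ∀ a : ZMod per, (it a.val).1 = (Fz a, Fz (a + 1)) := by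
      intro a
      rw [pairF]
      have e : Fz (a + 1) = F (a.val + 1) := by
        rw [show (1 : ZMod per) = ((1 : ℕ) : ZMod per) by norm_cast, FzShift]
      rw [e]
    have hpairne : Fz (i + 1) ≠ Fz (j + 1) := by
      intro hA
      have : (it i.val).1 = (it j.val).1 := by
        rw [hFzpair, hFzpair, hij, hA]
      rcases Nat.lt_or_ge i.val j.val with hlt | hge
      · exact hinjkey i j hlt this
      · exact hinjkey j i (by omega) this.symm
    -- reflection case
    have hmemj1 : Fz (j + 1) ∈ H.neighborSet (Fz i) := by
      rw [hij]; exact (mem_neighborSet _ _ _).mpr (adjz j)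
    rw [hNear i] at hmemj1
    simp only [Set.mem_insert_iff, Set.mem_singleton_iff] at hmemj1
    have hb1 : Fz (j + 1) = Fz (i - 1) := by
      rcases hmemj1 with h | h
      · exact h
      · exact absurd h.symm hpairne
    have hmemj2 : Fz (j - 1) ∈ H.neighborSet (Fz i) := by
      rw [hij]
      refine (mem_neighborSet _ _ _).mpr ?_
      have := (adjz (j - 1)).symm
      rwa [show j - 1 + 1 = j by ring] at this
    rw [hNear i] at hmemj2
    simp only [Set.mem_insert_iff, Set.mem_singleton_iff] at hmemj2
    have hb2 : Fz (j - 1) = Fz (i + 1) := by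
      rcases hmemj2 with h | h
      · exfalso
        have hx := nbz (j - 1)
        rw [show j - 1 + 2 = j + 1 by ring] at hx
        exact hx (hb1.trans h.symm)
      · exact h
    have hrefl : ∀ k : ℕ, Fz (j + (k : ZMod per)) = Fz (i - (k : ZMod per)) ∧
        Fz (j + (k : ZMod per) + 1) = Fz (i - (k : ZMod per) - 1) := by
      intro k
      induction k with
      | zero =>
        constructor
        · simpa using hij.symm
        · simpa using hb1
      | succ k ih =>
        obtain ⟨ih1, ih2⟩ := ih
        have hcast : (((k + 1) : ℕ) : ZMod per) = (k : ZMod per) + 1 := by push_cast; ring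
        constructor
        · rw [hcast, show j + ((k : ZMod per) + 1) = j + (k : ZMod per) + 1 by ring,
            show i - ((k : ZMod per) + 1) = i - (k : ZMod per) - 1 by ring]
          exact ih2
        · rw [hcast, show j + ((k : ZMod per) + 1) + 1 = j + (k : ZMod per) + 1 + 1 by ring,
            show i - ((k : ZMod per) + 1) - 1 = i - (k : ZMod per) - 2 by ring]
          have hN := Nz (i - (k : ZMod per) - 2)
          rw [show i - (k : ZMod per) - 2 + 1 = i - (k : ZMod per) - 1 by ring,
            show i - (k : ZMod per) - 2 + 2 = i - (k : ZMod per) by ring] at hN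
          have hmem : Fz (j + (k : ZMod per) + 1 + 1) ∈
              H.neighborSet (Fz (i - (k : ZMod per) - 1)) := by
            rw [← ih2]
            exact (mem_neighborSet _ _ _).mpr (adjz _)
          rw [hN] at hmem
          simp only [Set.mem_insert_iff, Set.mem_singleton_iff] at hmem
          rcases hmem with h | h
          · exact h
          · exfalso
            have hx := nbz (j + (k : ZMod per))
            rw [show j + (k : ZMod per) + 2 = j + (k : ZMod per) + 1 + 1 by ring] at hx
            exact hx (h.trans ih1.symm)
    have reflz : ∀ s : ZMod per, Fz s = Fz (i + j - s) := by
      intro s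
      have hk := (hrefl ((s - j).val)).1
      rw [hcastval (s - j)] at hk
      rwa [show j + (s - j) = s by ring, show i - (s - j) = i + j - s by ring] at hk
    have hsolve : ∃ s : ZMod per, 2 * s = i + j ∨ 2 * s = i + j - 1 := by
      set c := i + j with hcdef
      rcases Nat.even_or_odd c.val with he | ho
      · refine ⟨((c.val / 2 : ℕ) : ZMod per), Or.inl ?_⟩
        have h1 : 2 * (c.val / 2) = c.val := by
          have := Nat.even_iff.mp he; omega
        calc 2 * ((c.val / 2 : ℕ) : ZMod per) = ((2 * (c.val / 2) : ℕ) : ZMod per) := by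
              push_cast; ring
        _ = ((c.val : ℕ) : ZMod per) := by rw [h1]
        _ = c := hcastval c
      · refine ⟨((c.val / 2 : ℕ) : ZMod per), Or.inr ?_⟩
        have hodd := Nat.odd_iff.mp ho
        have h1 : 2 * (c.val / 2) = c.val - 1 := by omega
        have hge : 1 ≤ c.val := by omega
        calc 2 * ((c.val / 2 : ℕ) : ZMod per) = ((2 * (c.val / 2) : ℕ) : ZMod per) := by
              push_cast; ring
        _ = ((c.val - 1 : ℕ) : ZMod per) := by rw [h1]
        _ = c - 1 := by
              rw [Nat.cast_sub hge, hcastval c, Nat.cast_one]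
    obtain ⟨s, hs | hs⟩ := hsolve
    · have h1 := reflz (s + 1)
      rw [show i + j - (s + 1) = s - 1 by rw [← hs]; ring] at h1
      have hx := nbz (s - 1)
      rw [show s - 1 + 2 = s + 1 by ring] at hx
      exact hx h1
    · have h1 := reflz s
      rw [show i + j - s = s + 1 by linear_combination -hs] at h1
      exact (adjz s).ne h1
  have hchar : ∀ i j : ZMod per, H.Adj (Fz i) (Fz j) ↔ (j = i + 1 ∨ i = j + 1) := by
    intro i j
    constructor
    · intro hadj
      have : Fz j ∈ H.neighborSet (Fz i) := (mem_neighborSet _ _ _).mpr hadj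
      rw [hNear i] at this
      simp only [Set.mem_insert_iff, Set.mem_singleton_iff] at this
      rcases this with h | h
      · right
        have := hinj h
        rw [this]; ring
      · left
        exact hinj h
    · rintro (rfl | rfl)
      · exact adjz i
      · exact (adjz j).symm
  have hcard : per = Fintype.card V := by
    have := Fintype.card_of_bijective (f := Fz) ⟨hinj, hsurj⟩
    rwa [ZMod.card] at this
  exact hcard ▸ ⟨Fz, ⟨hinj, hsurj⟩, hchar⟩

open SimpleGraph in
lemma hcs_aut_form [Fintype V] {H : SimpleGraph V} (hc : H.Connected)
    (h2 : ∀ v, (H.neighborSet v).ncard = 2) (f : ZMod (Fintype.card V) → V)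
    (hf : Function.Bijective f)
    (hchar : ∀ i j, H.Adj (f i) (f j) ↔ (j = i + 1 ∨ i = j + 1))
    {g : Equiv.Perm V} (hg : g • H = H) :
    (∃ c, ∀ i, g (f i) = f (i + c)) ∨ (∃ c, ∀ i, g (f i) = f (c - i)) := by
  classical
  set E : ZMod (Fintype.card V) ≃ V := Equiv.ofBijective f hf with hE
  have hEapp : ∀ i, E i = f i := fun i => rfl
  have hEsymm : ∀ i, E.symm (f i) = i := fun i => Equiv.symm_apply_apply E i
  obtain ⟨c, hc0⟩ := hf.2 (g (f 0))
  obtain ⟨d, hd0⟩ := hf.2 (g (f 1))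
  have h01 : H.Adj (f 0) (f 1) := (hchar 0 1).mpr (Or.inl (zero_add 1).symm)
  have hcd : H.Adj (f c) (f d) := by
    rw [hc0, hd0]
    exact (adj_of_smul_eq hg _ _).mpr h01
  have haux : ∀ (ρ : Equiv.Perm V), (∀ x y, H.Adj (ρ x) (ρ y) ↔ H.Adj x y) → ρ • H = H := by
    intro ρ hρ
    ext x y
    rw [hcs_smul_adj]
    have := hρ (ρ⁻¹ x) (ρ⁻¹ y)
    simp only [Equiv.Perm.inv_def, Equiv.apply_symm_apply] at this
    exact this.symm
  rcases (hchar c d).mp hcd with hrot | href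
  · -- rotation
    left
    refine ⟨c, ?_⟩
    let ρ : Equiv.Perm V := (E.symm.trans (Equiv.addRight c)).trans E
    have hρapp : ∀ i, ρ (f i) = f (i + c) := by
      intro i
      show E (Equiv.addRight c (E.symm (f i))) = f (i + c)
      rw [hEsymm, Equiv.coe_addRight, hEapp]
    have hρH : ρ • H = H := by
      apply haux
      intro x y
      obtain ⟨a, rfl⟩ := hf.2 x
      obtain ⟨b, rfl⟩ := hf.2 y
      rw [hρapp, hρapp, hchar, hchar]
      constructor
      · rintro (h | h)
        · left; linear_combination h
        · right; linear_combination h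
      · rintro (rfl | rfl)
        · left; ring
        · right; ring
    have hφH : (ρ⁻¹ * g) • H = H := by
      rw [mul_smul, hg, inv_smul_eq_iff, hρH]
    have hfix0 : (ρ⁻¹ * g) (f 0) = f 0 := by
      show ρ⁻¹ (g (f 0)) = f 0
      rw [← hc0, show f c = ρ (f 0) by rw [hρapp, zero_add]]
      exact Equiv.symm_apply_apply ρ (f 0)
    have hfix1 : (ρ⁻¹ * g) (f 1) = f 1 := by
      show ρ⁻¹ (g (f 1)) = f 1
      rw [← hd0, hrot, show f (c + 1) = ρ (f 1) by rw [hρapp, add_comm]]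
      exact Equiv.symm_apply_apply ρ (f 1)
    have hall := hcs_rigid hc h2 hφH h01 hfix0 hfix1
    intro i
    have hgi : ρ⁻¹ (g (f i)) = f i := hall (f i)
    rw [← hρapp i]
    calc g (f i) = ρ (ρ⁻¹ (g (f i))) := (Equiv.apply_symm_apply ρ _).symm
    _ = ρ (f i) := by rw [hgi]
  · -- reflection : c = d + 1, i.e. d = c - 1
    right
    refine ⟨c, ?_⟩
    let ρ : Equiv.Perm V := (E.symm.trans (Equiv.subLeft c)).trans E
    have hρapp : ∀ i, ρ (f i) = f (c - i) := by
      intro i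
      show E (Equiv.subLeft c (E.symm (f i))) = f (c - i)
      rw [hEsymm, Equiv.subLeft_apply, hEapp]
    have hρH : ρ • H = H := by
      apply haux
      intro x y
      obtain ⟨a, rfl⟩ := hf.2 x
      obtain ⟨b, rfl⟩ := hf.2 y
      rw [hρapp, hρapp, hchar, hchar]
      constructor
      · rintro (h | h)
        · right; linear_combination h
        · left; linear_combination h
      · rintro (rfl | rfl)
        · right; ring
        · left; ring
    have hφH : (ρ⁻¹ * g) • H = H := by
      rw [mul_smul, hg, inv_smul_eq_iff, hρH]
    have hfix0 : (ρ⁻¹ * g) (f 0) = f 0 := by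
      show ρ⁻¹ (g (f 0)) = f 0
      rw [← hc0, show f c = ρ (f 0) by rw [hρapp, sub_zero]]
      exact Equiv.symm_apply_apply ρ (f 0)
    have hfix1 : (ρ⁻¹ * g) (f 1) = f 1 := by
      show ρ⁻¹ (g (f 1)) = f 1
      have hd : d = c - 1 := by rw [href]; ring
      rw [← hd0, hd, show f (c - 1) = ρ (f 1) by rw [hρapp]]
      exact Equiv.symm_apply_apply ρ (f 1)
    have hall := hcs_rigid hc h2 hφH h01 hfix0 hfix1
    intro i
    have hgi : ρ⁻¹ (g (f i)) = f i := hall (f i)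
    rw [← hρapp i]
    calc g (f i) = ρ (ρ⁻¹ (g (f i))) := (Equiv.apply_symm_apply ρ _).symm
    _ = ρ (f i) := by rw [hgi]


lemma zmod_no_two_torsion {m : ℕ} (hm : m % 2 = 1) {z : ZMod m} (hz : z + z = 0) : z = 0 := by
  haveI : NeZero m := ⟨by omega⟩
  have h1 : 2 * ((m + 1) / 2) = m + 1 := by omega
  have h2 : ((2 : ℕ) : ZMod m) * (((m + 1) / 2 : ℕ) : ZMod m) = 1 := by
    calc ((2 : ℕ) : ZMod m) * (((m + 1) / 2 : ℕ) : ZMod m)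
        = ((2 * ((m + 1) / 2) : ℕ) : ZMod m) := by rw [Nat.cast_mul]
    _ = ((m + 1 : ℕ) : ZMod m) := by rw [h1]
    _ = 1 := by rw [Nat.cast_add, ZMod.natCast_self, Nat.cast_one, zero_add]
  have hz2 : ((2 : ℕ) : ZMod m) * z = 0 := by push_cast; linear_combination hz
  calc z = (((m + 1) / 2 : ℕ) : ZMod m) * (((2 : ℕ) : ZMod m) * z) := by
        rw [← mul_assoc, mul_comm (((m + 1) / 2 : ℕ) : ZMod m), h2, one_mul]
  _ = 0 := by rw [hz2, mul_zero]

lemma zmod_two_cancel {m : ℕ} (hm : m % 2 = 1) {z w : ZMod m} (h : z + z = w + w) : z = w := by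
  have h1 : (z - w) + (z - w) = 0 := by linear_combination h
  have h2 := zmod_no_two_torsion hm h1
  linear_combination h2

lemma hcs_mem_smul {𝓗 : Set (SimpleGraph V)} {g : Equiv.Perm V}
    (hg : g ∈ autHCS 𝓗) {H : SimpleGraph V} (hH : H ∈ 𝓗) : g • H ∈ 𝓗 := by
  have h1 : g • 𝓗 = 𝓗 := MulAction.mem_stabilizer_iff.mp hg
  rw [← h1]
  exact Set.smul_mem_smul_set hH

lemma hcs_cyc [Fintype V] {𝓗 : Set (SimpleGraph V)} (h : IsHCS 𝓗) {x y : V} (hxy : x ≠ y) :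
    ∃ H, (H ∈ 𝓗 ∧ H.Adj x y) ∧ ∀ H', H' ∈ 𝓗 → H'.Adj x y → H' = H := by
  obtain ⟨H, ⟨h1, h2⟩, h3⟩ :=
    h.2 s(x, y) ((SimpleGraph.mem_edgeSet ⊤).mpr ((SimpleGraph.top_adj x y).mpr hxy))
  exact ⟨H, ⟨h1, (SimpleGraph.mem_edgeSet H).mp h2⟩,
    fun H' hm ha => h3 H' ⟨hm, (SimpleGraph.mem_edgeSet H').mpr ha⟩⟩

lemma hcs_fix_two [Fintype V] {𝓗 : Set (SimpleGraph V)} (h : IsHCS 𝓗) {g : Equiv.Perm V}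
    (hg : g ∈ autHCS 𝓗) {u w : V} (huw : u ≠ w) (hu : g u = u) (hw : g w = w) : g = 1 := by
  obtain ⟨H, ⟨hH, hadj⟩, huniq⟩ := hcs_cyc h huw
  have hmem : g • H ∈ 𝓗 := hcs_mem_smul hg hH
  have hadj' : (g • H).Adj u w := by
    have := (hcs_smul_adj' g H u w).mpr hadj
    rwa [hu, hw] at this
  have hfix : g • H = H := huniq _ hmem hadj'
  have hall := hcs_rigid (h.1 H hH).1 (h.1 H hH).2 hfix hadj hu hw
  exact Equiv.ext fun z => (hall z).trans (Equiv.Perm.one_apply z).symm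

lemma invol_has_fix [Fintype V] {n : ℕ} (hV : Fintype.card V = 2 * n + 1) {σ : Equiv.Perm V}
    (h2 : orderOf σ = 2) : ∃ a, σ a = a := by
  classical
  haveI : Fact (Nat.Prime 2) := ⟨Nat.prime_two⟩
  have hcard : Nat.card (Subgroup.zpowers σ) = 2 := by rw [Nat.card_zpowers, h2]
  have hp : IsPGroup 2 (Subgroup.zpowers σ) := by
    apply IsPGroup.of_card (n := 1)
    rw [hcard, pow_one]
  have hmod := hp.card_modEq_card_fixedPoints V
  have hV' : Nat.card V = 2 * n + 1 := by rw [Nat.card_eq_fintype_card, hV]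
  rw [hV'] at hmod
  have hpos : Nat.card (MulAction.fixedPoints (Subgroup.zpowers σ) V) ≠ 0 := by
    intro h0
    rw [h0] at hmod
    have h1 : (2 * n + 1) % 2 = 0 % 2 := hmod
    omega
  have hne : (MulAction.fixedPoints (Subgroup.zpowers σ) V).Nonempty := by
    apply Set.nonempty_of_ncard_ne_zero
    rwa [← Nat.card_coe_set_eq]
  obtain ⟨a, ha⟩ := hne
  exact ⟨a, ha ⟨σ, Subgroup.mem_zpowers σ⟩⟩

lemma ham_three [Fintype V] {H : SimpleGraph V} (hH : IsHamCycle H) : 3 ≤ Fintype.card V := by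
  classical
  obtain ⟨v⟩ := hH.1.nonempty
  obtain ⟨x, y, hxy, hN⟩ := Set.ncard_eq_two.mp (hH.2 v)
  have hx : H.Adj v x := by
    have h1 : x ∈ H.neighborSet v := by rw [hN]; simp
    exact h1
  have hy : H.Adj v y := by
    have h1 : y ∈ H.neighborSet v := by rw [hN]; simp
    exact h1
  have hcard : ({v, x, y} : Finset V).card = 3 := by
    rw [Finset.card_insert_of_notMem (by simp [hx.ne, hy.ne]),
      Finset.card_insert_of_notMem (by simp [hxy]), Finset.card_singleton]
  calc 3 = ({v, x, y} : Finset V).card := hcard.symm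
  _ ≤ Finset.univ.card := Finset.card_le_univ _
  _ = Fintype.card V := Finset.card_univ

open SimpleGraph in
lemma hcs_edge_ncard [Fintype V] {H : SimpleGraph V} (hH : IsHamCycle H) :
    H.edgeSet.ncard = Fintype.card V := by
  classical
  obtain ⟨f, hf, hchar⟩ := hcs_coords hH.1 hH.2
  have h3 : 3 ≤ Fintype.card V := ham_three hH
  have h2ne : ((2 : ℕ) : ZMod (Fintype.card V)) ≠ 0 := by
    rw [Ne, ZMod.natCast_eq_zero_iff]
    intro hdvd
    have := Nat.le_of_dvd (by omega) hdvd
    omega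
  have hrange : H.edgeSet = Set.range (fun i : ZMod (Fintype.card V) => s(f i, f (i + 1))) := by
    ext e
    induction e with
    | _ x y =>
      rw [mem_edgeSet]
      constructor
      · intro hadj
        obtain ⟨a, rfl⟩ := hf.2 x
        obtain ⟨b, rfl⟩ := hf.2 y
        rcases (hchar a b).mp hadj with hb | hb
        · exact ⟨a, by rw [hb]⟩
        · exact ⟨b, by rw [hb, Sym2.eq_swap]⟩
      · rintro ⟨i, hi⟩
        have hadj : H.Adj (f i) (f (i + 1)) := (hchar i (i + 1)).mpr (Or.inl rfl)
        rcases Sym2.eq_iff.mp hi with ⟨h1, h2⟩ | ⟨h1, h2⟩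
        · rwa [h1, h2] at hadj
        · rw [h1, h2] at hadj
          exact hadj.symm
  have hinj : Function.Injective (fun i : ZMod (Fintype.card V) => s(f i, f (i + 1))) := by
    intro i j hij
    simp only [Sym2.eq_iff] at hij
    rcases hij with ⟨h1, _⟩ | ⟨h1, h2⟩
    · exact hf.1 h1
    · exfalso
      have e1 : i = j + 1 := hf.1 h1
      have e2 : i + 1 = j := hf.1 h2
      have h0 : ((2 : ℕ) : ZMod (Fintype.card V)) = 0 := by
        push_cast
        linear_combination e2 - e1
      exact h2ne h0
  haveI : NeZero (Fintype.card V) := ⟨by omega⟩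
  rw [hrange, ← Set.image_univ, Set.ncard_image_of_injective _ hinj, Set.ncard_univ,
    Nat.card_eq_fintype_card, ZMod.card]

open SimpleGraph in
lemma hcs_count [Fintype V] {n : ℕ} (hV : Fintype.card V = 2 * n + 1)
    {𝓗 : Set (SimpleGraph V)} (h : IsHCS 𝓗) :
    (Set.toFinite 𝓗).toFinset.card = n := by
  classical
  set HF := (Set.toFinite 𝓗).toFinset with hHF
  have hmemHF : ∀ H, H ∈ HF ↔ H ∈ 𝓗 := fun H => Set.Finite.mem_toFinset _
  set EF : SimpleGraph V → Finset (Sym2 V) := fun H => (Set.toFinite H.edgeSet).toFinset with hEF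
  have hmemEF : ∀ H e, e ∈ EF H ↔ e ∈ H.edgeSet := fun H e => Set.Finite.mem_toFinset _
  have hdisj : ∀ H1 ∈ HF, ∀ H2 ∈ HF, H1 ≠ H2 → Disjoint (EF H1) (EF H2) := by
    intro H1 h1 H2 h2 hne
    rw [Finset.disjoint_left]
    intro e he1 he2
    have he1' : e ∈ H1.edgeSet := (hmemEF _ _).mp he1
    have he2' : e ∈ H2.edgeSet := (hmemEF _ _).mp he2
    have htop : e ∈ (⊤ : SimpleGraph V).edgeSet := SimpleGraph.edgeSet_mono le_top he1'
    obtain ⟨Hu, _, huniq⟩ := h.2 e htop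
    have e1 := huniq H1 ⟨(hmemHF _).mp h1, he1'⟩
    have e2 := huniq H2 ⟨(hmemHF _).mp h2, he2'⟩
    exact hne (e1.trans e2.symm)
  have hbiun : HF.biUnion EF = (Set.toFinite (⊤ : SimpleGraph V).edgeSet).toFinset := by
    ext e
    simp only [Finset.mem_biUnion, Set.Finite.mem_toFinset]
    constructor
    · rintro ⟨H1, h1, he⟩
      exact SimpleGraph.edgeSet_mono le_top ((hmemEF _ _).mp he)
    · intro he
      obtain ⟨H1, ⟨h1, he1⟩, _⟩ := h.2 e he
      exact ⟨H1, (hmemHF _).mpr h1, (hmemEF _ _).mpr he1⟩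
  have hcount := Finset.card_biUnion hdisj
  rw [hbiun] at hcount
  have htopcard : (Set.toFinite (⊤ : SimpleGraph V).edgeSet).toFinset.card = n * (2 * n + 1) := by
    have h1 : (Set.toFinite (⊤ : SimpleGraph V).edgeSet).toFinset =
        (⊤ : SimpleGraph V).edgeFinset := by
      ext e
      rw [Set.Finite.mem_toFinset, SimpleGraph.mem_edgeFinset]
    rw [h1, SimpleGraph.card_edgeFinset_top_eq_card_choose_two, hV, Nat.choose_two_right]
    have h2 : (2 * n + 1) * (2 * n + 1 - 1) = 2 * (n * (2 * n + 1)) := by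
      have : 2 * n + 1 - 1 = 2 * n := by omega
      rw [this]; ring
    rw [h2, Nat.mul_div_cancel_left _ (by norm_num : (0:ℕ) < 2)]
  have heach : ∀ H ∈ HF, (EF H).card = 2 * n + 1 := by
    intro H hH
    have h1 := hcs_edge_ncard (h.1 H ((hmemHF _).mp hH))
    rw [hV] at h1
    rw [← h1, Set.ncard_eq_toFinset_card H.edgeSet (Set.toFinite _)]
  have hsum : ∑ H ∈ HF, (EF H).card = HF.card * (2 * n + 1) := by
    rw [Finset.sum_congr rfl heach, Finset.sum_const, smul_eq_mul]
  rw [hsum, htopcard] at hcount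
  have hfin := Nat.eq_of_mul_eq_mul_right (show 0 < 2 * n + 1 by omega) hcount
  omega

open SimpleGraph in
lemma invol_reflect [Fintype V] (hmodd : Fintype.card V % 2 = 1) {H : SimpleGraph V}
    (hc : H.Connected) (h2 : ∀ v, (H.neighborSet v).ncard = 2)
    (f : ZMod (Fintype.card V) → V) (hf : Function.Bijective f)
    (hchar : ∀ i j, H.Adj (f i) (f j) ↔ (j = i + 1 ∨ i = j + 1))
    {σ : Equiv.Perm V} (hgH : σ • H = H) (hσσ : ∀ v, σ (σ v) = v) (hσne : σ ≠ 1) :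
    ∃ c, ∀ i, σ (f i) = f (c - i) := by
  rcases hcs_aut_form hc h2 f hf hchar hgH with ⟨c, hrot⟩ | hr
  · exfalso
    have hcc : c + c = 0 := by
      have h1 : σ (σ (f 0)) = f 0 := hσσ _
      rw [hrot 0, hrot (0 + c)] at h1
      have h3 := hf.1 h1
      linear_combination h3
    have hc0 : c = 0 := zmod_no_two_torsion hmodd hcc
    apply hσne
    refine Equiv.ext fun v => ?_
    obtain ⟨i, rfl⟩ := hf.2 v
    rw [hrot i, hc0, add_zero, Equiv.Perm.one_apply]
  · exact hr

open SimpleGraph in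
lemma invol_fixes_all [Fintype V] {n : ℕ} (hV : Fintype.card V = 2 * n + 1)
    {𝓗 : Set (SimpleGraph V)} (h : IsHCS 𝓗) {σ : Equiv.Perm V}
    (hσ : σ ∈ autHCS 𝓗) (h2 : orderOf σ = 2) : ∀ H ∈ 𝓗, σ • H = H := by
  classical
  have hmodd : Fintype.card V % 2 = 1 := by rw [hV]; omega
  have hσmul : σ * σ = 1 := by
    have h1 := pow_orderOf_eq_one σ
    rwa [h2, pow_two] at h1
  have hσσ : ∀ x, σ (σ x) = x := fun x => by
    rw [← Equiv.Perm.mul_apply, hσmul, Equiv.Perm.one_apply]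
  have hσne : σ ≠ 1 := by
    intro e
    rw [e, orderOf_one] at h2
    omega
  obtain ⟨a, ha⟩ := invol_has_fix hV h2
  have hfixiff : ∀ x, σ x = x ↔ x = a := by
    intro x
    constructor
    · intro hx
      by_contra hxa
      exact hσne (hcs_fix_two h hσ hxa hx ha)
    · rintro rfl; exact ha
  set HF := (Set.toFinite 𝓗).toFinset with hHF
  have hmemHF : ∀ H, H ∈ HF ↔ H ∈ 𝓗 := fun H => Set.Finite.mem_toFinset _
  have hcardHF : HF.card = n := hcs_count hV h
  set A : Finset V := Finset.univ.filter (fun x => σ x ≠ x) with hA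
  have hmemA : ∀ x, x ∈ A ↔ σ x ≠ x := by
    intro x
    rw [hA, Finset.mem_filter]
    simp
  have hAcard : A.card = 2 * n := by
    have hAeq : A = Finset.univ.erase a := by
      ext x
      rw [hmemA, Finset.mem_erase]
      simp only [Finset.mem_univ, and_true]
      exact not_congr (hfixiff x)
    rw [hAeq, Finset.card_erase_of_mem (Finset.mem_univ a), Finset.card_univ, hV]
    omega
  have hψchoice : ∀ x : V, ∃ Hx : SimpleGraph V, σ x = x ∨
      ((Hx ∈ 𝓗 ∧ Hx.Adj x (σ x)) ∧ ∀ H', H' ∈ 𝓗 → H'.Adj x (σ x) → H' = Hx) := by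
    intro x
    by_cases hx : σ x = x
    · exact ⟨⊥, Or.inl hx⟩
    · obtain ⟨Hx, h1, h2'⟩ := hcs_cyc h (fun e => hx e.symm)
      exact ⟨Hx, Or.inr ⟨h1, h2'⟩⟩
  choose ψ hψ using hψchoice
  have hψspec : ∀ x : V, σ x ≠ x → (ψ x ∈ 𝓗 ∧ (ψ x).Adj x (σ x)) ∧
      ∀ H', H' ∈ 𝓗 → H'.Adj x (σ x) → H' = ψ x := by
    intro x hx
    rcases hψ x with h1 | h1
    · exact absurd h1 hx
    · exact h1
  have hfib_mem : ∀ x, σ x ≠ x → ∀ H1, H1 ∈ 𝓗 → (ψ x = H1 ↔ H1.Adj x (σ x)) := by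
    intro x hx H1 hH1
    constructor
    · rintro rfl; exact ((hψspec x hx).1).2
    · intro hadj; exact ((hψspec x hx).2 H1 hH1 hadj).symm
  have hfib0 : ∀ H1, H1 ∈ 𝓗 → σ • H1 ≠ H1 → (A.filter (fun x => ψ x = H1)).card = 0 := by
    intro H1 hH1 hne
    rw [Finset.card_eq_zero, Finset.eq_empty_iff_forall_notMem]
    intro x hx
    rw [Finset.mem_filter] at hx
    obtain ⟨hxA, hxψ⟩ := hx
    have hxne : σ x ≠ x := (hmemA x).mp hxA
    have hadj : H1.Adj x (σ x) := (hfib_mem x hxne H1 hH1).mp hxψ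
    have hadj2 : (σ • H1).Adj x (σ x) := by
      have h1 := (hcs_smul_adj' σ H1 (σ x) x).mpr hadj.symm
      rw [hσσ x] at h1
      exact h1
    have h1 : σ • H1 = ψ x := (hψspec x hxne).2 (σ • H1) (hcs_mem_smul hσ hH1) hadj2
    rw [hxψ] at h1
    exact hne h1
  have hfib2 : ∀ H1, H1 ∈ 𝓗 → σ • H1 = H1 → (A.filter (fun x => ψ x = H1)).card = 2 := by
    intro H1 hH1 hfix
    obtain ⟨f, hf, hchar⟩ := hcs_coords (h.1 H1 hH1).1 (h.1 H1 hH1).2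
    obtain ⟨c, href⟩ :=
      invol_reflect hmodd (h.1 H1 hH1).1 (h.1 H1 hH1).2 f hf hchar hfix hσσ hσne
    obtain ⟨i1, hi1⟩ : ∃ i1 : ZMod (Fintype.card V), i1 + i1 = c - 1 := by
      refine ⟨(((Fintype.card V + 1) / 2 : ℕ) : ZMod (Fintype.card V)) * (c - 1), ?_⟩
      have h1 : (((Fintype.card V + 1) / 2 : ℕ) : ZMod (Fintype.card V)) +
          (((Fintype.card V + 1) / 2 : ℕ) : ZMod (Fintype.card V)) = 1 := by
        rw [← Nat.cast_add]
        have e1 : (Fintype.card V + 1) / 2 + (Fintype.card V + 1) / 2 = Fintype.card V + 1 := by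
          omega
        rw [e1, Nat.cast_add, ZMod.natCast_self, Nat.cast_one, zero_add]
      linear_combination (c - 1) * h1
    have hmemchar : ∀ x, (x ∈ A ∧ ψ x = H1) ↔ H1.Adj x (σ x) := by
      intro x
      constructor
      · rintro ⟨hxA, hxψ⟩
        exact (hfib_mem x ((hmemA x).mp hxA) H1 hH1).mp hxψ
      · intro hadj
        have hxne : σ x ≠ x := fun e => hadj.ne e.symm
        exact ⟨(hmemA x).mpr hxne, (hfib_mem x hxne H1 hH1).mpr hadj⟩
    have hadj_iff : ∀ i : ZMod (Fintype.card V),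
        H1.Adj (f i) (σ (f i)) ↔ (i = i1 ∨ i = i1 + 1) := by
      intro i
      rw [href i, hchar]
      constructor
      · rintro (h1 | h1)
        · left
          apply zmod_two_cancel hmodd
          rw [hi1]
          linear_combination -h1
        · right
          apply zmod_two_cancel hmodd
          have e1 : (i1 + 1) + (i1 + 1) = c + 1 := by linear_combination hi1
          rw [e1]
          linear_combination h1
      · rintro (rfl | rfl)
        · left; linear_combination -hi1
        · right; linear_combination hi1
    have hfilter : A.filter (fun x => ψ x = H1) = {f i1, f (i1 + 1)} := by
      ext x
      rw [Finset.mem_filter]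
      constructor
      · intro hx
        have hadj : H1.Adj x (σ x) := (hmemchar x).mp hx
        obtain ⟨i, rfl⟩ := hf.2 x
        rcases (hadj_iff i).mp hadj with rfl | rfl
        · simp
        · simp
      · intro hx
        simp only [Finset.mem_insert, Finset.mem_singleton] at hx
        have hadj : H1.Adj x (σ x) := by
          rcases hx with rfl | rfl
          · exact (hadj_iff i1).mpr (Or.inl rfl)
          · exact (hadj_iff (i1 + 1)).mpr (Or.inr rfl)
        exact (hmemchar x).mpr hadj
    rw [hfilter]
    rw [Finset.card_insert_of_notMem, Finset.card_singleton]
    simp only [Finset.mem_singleton]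
    intro heq
    have h1 : i1 = i1 + 1 := hf.1 heq
    have h10 : ((1 : ℕ) : ZMod (Fintype.card V)) = 0 := by
      push_cast
      linear_combination -h1
    rw [ZMod.natCast_eq_zero_iff] at h10
    have h3 : 3 ≤ Fintype.card V := ham_three (h.1 H1 hH1)
    have := Nat.le_of_dvd one_pos h10
    omega
  intro H1 hH1
  by_contra hne
  have hmain : A.card = ∑ H2 ∈ HF, (A.filter (fun x => ψ x = H2)).card := by
    apply Finset.card_eq_sum_card_fiberwise
    intro x hx
    exact (hmemHF _).mpr ((hψspec x ((hmemA x).mp hx)).1).1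
  have hle : ∀ H2 ∈ HF, (A.filter (fun x => ψ x = H2)).card ≤ 2 := by
    intro H2 hH2
    by_cases hfix : σ • H2 = H2
    · rw [hfib2 H2 ((hmemHF _).mp hH2) hfix]
    · rw [hfib0 H2 ((hmemHF _).mp hH2) hfix]; omega
  have hH1F : H1 ∈ HF := (hmemHF _).mpr hH1
  have hn1 : 1 ≤ n := by
    by_contra hn0
    have hn : n = 0 := by omega
    have hHF0 : HF = ∅ := Finset.card_eq_zero.mp (by rw [hcardHF, hn])
    rw [hHF0] at hH1F
    exact absurd hH1F (Finset.notMem_empty H1)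
  have hfinal : (2 * n : ℕ) ≤ (n - 1) * 2 := by
    calc (2 * n : ℕ) = A.card := hAcard.symm
    _ = ∑ H2 ∈ HF, (A.filter (fun x => ψ x = H2)).card := hmain
    _ = (A.filter (fun x => ψ x = H1)).card +
        ∑ H2 ∈ HF.erase H1, (A.filter (fun x => ψ x = H2)).card :=
      (Finset.add_sum_erase HF _ hH1F).symm
    _ = ∑ H2 ∈ HF.erase H1, (A.filter (fun x => ψ x = H2)).card := by
      rw [hfib0 H1 hH1 hne, zero_add]
    _ ≤ (HF.erase H1).card * 2 := by
      have h1 := Finset.sum_le_card_nsmul (HF.erase H1) _ 2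
        (fun x hx => hle x (Finset.mem_of_mem_erase hx))
      simpa [smul_eq_mul] using h1
    _ = (n - 1) * 2 := by rw [Finset.card_erase_of_mem hH1F, hcardHF]
  omega


open SimpleGraph in
/-- if the full automorphism group of an HCS of order `2n+1` has even order,
then it has a unique involution, or `2n+1` is prime and the group is `AGL(1, 2n+1)`. -/
theorem even_aut_binary_or_agl [Fintype V] (n : ℕ) (hV : Fintype.card V = 2 * n + 1)
    (𝓗 : Set (SimpleGraph V)) (h : IsHCS 𝓗)
    (heven : Even (Nat.card (autHCS 𝓗))) :
    (∃! σ : Equiv.Perm V, σ ∈ autHCS 𝓗 ∧ orderOf σ = 2) ∨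
      ((2 * n + 1).Prime ∧ Nonempty ((autHCS 𝓗) ≃*
        (ZMod (2*n+1) ≃ᵃ[ZMod (2*n+1)] ZMod (2*n+1)))) := by
  classical
  haveI : Fintype ↥(autHCS 𝓗) := Fintype.ofFinite _
  haveI : Fact (Nat.Prime 2) := ⟨Nat.prime_two⟩
  have hdvd : 2 ∣ Fintype.card ↥(autHCS 𝓗) := by
    rw [← Nat.card_eq_fintype_card]
    exact heven.two_dvd
  obtain ⟨x0, hx0⟩ := exists_prime_orderOf_dvd_card 2 hdvd
  have hσmem : (x0 : Equiv.Perm V) ∈ autHCS 𝓗 := x0.2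
  have hσord : orderOf (x0 : Equiv.Perm V) = 2 := by
    rw [← hx0]
    exact orderOf_injective (autHCS 𝓗).subtype Subtype.coe_injective x0
  by_cases huniq : ∀ τ : Equiv.Perm V, τ ∈ autHCS 𝓗 ∧ orderOf τ = 2 → τ = (x0 : Equiv.Perm V)
  · exact Or.inl ⟨(x0 : Equiv.Perm V), ⟨hσmem, hσord⟩, huniq⟩
  right
  push_neg at huniq
  obtain ⟨τ, ⟨hτmem, hτord⟩, hτne⟩ := huniq
  set σ : Equiv.Perm V := (x0 : Equiv.Perm V) with hσdef
  have hmodd : Fintype.card V % 2 = 1 := by rw [hV]; omega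
  have hσmul : σ * σ = 1 := by
    have h1 := pow_orderOf_eq_one σ
    rwa [hσord, pow_two] at h1
  have hτmul : τ * τ = 1 := by
    have h1 := pow_orderOf_eq_one τ
    rwa [hτord, pow_two] at h1
  have hσσ : ∀ v, σ (σ v) = v := fun v => by
    rw [← Equiv.Perm.mul_apply, hσmul, Equiv.Perm.one_apply]
  have hττ : ∀ v, τ (τ v) = v := fun v => by
    rw [← Equiv.Perm.mul_apply, hτmul, Equiv.Perm.one_apply]
  have hσne1 : σ ≠ 1 := by
    intro e
    rw [e, orderOf_one] at hσord
    omega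
  have hτne1 : τ ≠ 1 := by
    intro e
    rw [e, orderOf_one] at hτord
    omega
  have hfixσ := invol_fixes_all hV h hσmem hσord
  have hfixτ := invol_fixes_all hV h hτmem hτord
  set t : Equiv.Perm V := σ * τ with htdef
  have htmem : t ∈ autHCS 𝓗 := Subgroup.mul_mem _ hσmem hτmem
  have htfix : ∀ H ∈ 𝓗, t • H = H := fun H hH => by
    rw [htdef, mul_smul, hfixτ H hH, hfixσ H hH]
  have htapp : ∀ v, t v = σ (τ v) := fun v => rfl
  have htne1 : t ≠ 1 := by
    intro he
    apply hτne
    have h1 : σ * τ = 1 := by rw [← htdef, he]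
    have h2' : τ = σ⁻¹ := eq_inv_of_mul_eq_one_right h1
    have h3 : σ⁻¹ = σ := inv_eq_of_mul_eq_one_left hσmul
    rw [h2', h3]
  have hrotc : ∀ H ∈ 𝓗, ∀ (f : ZMod (Fintype.card V) → V), Function.Bijective f →
      (∀ i j, H.Adj (f i) (f j) ↔ (j = i + 1 ∨ i = j + 1)) →
      ∃ c, ∀ i, t (f i) = f (i + c) := by
    intro H hH f hf hchar
    obtain ⟨c1, hs1⟩ :=
      invol_reflect hmodd (h.1 H hH).1 (h.1 H hH).2 f hf hchar (hfixσ H hH) hσσ hσne1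
    obtain ⟨c2, hs2⟩ :=
      invol_reflect hmodd (h.1 H hH).1 (h.1 H hH).2 f hf hchar (hfixτ H hH) hττ hτne1
    refine ⟨c1 - c2, fun i => ?_⟩
    rw [htapp, hs2 i, hs1 (c2 - i)]
    congr 1
    ring
  have hσmoves : ∃ w0, σ w0 ≠ w0 := by
    by_contra hall
    push_neg at hall
    exact hσne1 (Equiv.ext fun z => by rw [hall z, Equiv.Perm.one_apply])
  have htfpf : ∀ v, t v ≠ v := by
    intro v hv
    apply htne1
    obtain ⟨w0, hw0⟩ := hσmoves
    obtain ⟨H1, ⟨hH1, _⟩, _⟩ := hcs_cyc h (show w0 ≠ σ w0 from fun e => hw0 e.symm)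
    obtain ⟨f, hf, hchar⟩ := hcs_coords (h.1 H1 hH1).1 (h.1 H1 hH1).2
    obtain ⟨c, hr⟩ := hrotc H1 hH1 f hf hchar
    obtain ⟨iv, hiv⟩ := hf.2 v
    have h1 : f (iv + c) = f iv := by rw [← hr iv, hiv, hv]
    have hc0 : c = 0 := by
      have h2' := hf.1 h1
      linear_combination h2'
    refine Equiv.ext fun z => ?_
    obtain ⟨iz, rfl⟩ := hf.2 z
    rw [hr iz, hc0, add_zero, Equiv.Perm.one_apply]
  have hn1 : (1:ℕ) ≤ n := by
    obtain ⟨w0, hw0⟩ := hσmoves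
    have h2' : 2 ≤ Fintype.card V :=
      Fintype.one_lt_card_iff_nontrivial.mpr ⟨⟨w0, σ w0, fun e => hw0 e.symm⟩⟩
    omega
  obtain ⟨e, he, hte⟩ : ∃ e : ZMod (2 * n + 1) → V, Function.Bijective e ∧
      ∀ i, t (e i) = e (i + 1) := by
    rw [← hV]
    have hpos : 0 < Fintype.card V := by omega
    obtain ⟨vs⟩ : Nonempty V := Fintype.card_pos_iff.mp hpos
    have hvs : vs ≠ t vs := fun e' => htfpf vs e'.symm
    obtain ⟨H0, ⟨hH0, hadj0⟩, _⟩ := hcs_cyc h hvs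
    obtain ⟨f0, hf0, hchar0⟩ := hcs_coords (h.1 H0 hH0).1 (h.1 H0 hH0).2
    obtain ⟨c0, hrot0⟩ := hrotc H0 hH0 f0 hf0 hchar0
    obtain ⟨i0, hi0⟩ := hf0.2 vs
    have hadj1 : H0.Adj (f0 i0) (f0 (i0 + c0)) := by
      rw [← hrot0 i0, hi0]
      exact hadj0
    rcases (hchar0 i0 (i0 + c0)).mp hadj1 with hc1 | hc1
    · have hc0' : c0 = 1 := by linear_combination hc1
      exact ⟨f0, hf0, fun i => by rw [hrot0 i, hc0']⟩
    · have hc0' : c0 = -1 := by linear_combination -hc1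
      refine ⟨fun i => f0 (-i), hf0.comp (Equiv.neg (ZMod (Fintype.card V))).bijective,
        fun i => ?_⟩
      show t (f0 (-i)) = f0 (-(i + 1))
      rw [hrot0 (-i), hc0', show -i + -1 = -(i + 1) by ring]
  have hcv : ∀ i : ZMod (2 * n + 1), ((i.val : ℕ) : ZMod (2 * n + 1)) = i := fun i =>
    ZMod.natCast_rightInverse i
  have hshift : ∀ H ∈ 𝓗, ∀ i j : ZMod (2 * n + 1),
      H.Adj (e i) (e j) ↔ H.Adj (e 0) (e (j - i)) := by
    intro H hH
    have hstep1 : ∀ i j, H.Adj (e i) (e j) ↔ H.Adj (e (i + 1)) (e (j + 1)) := by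
      intro i j
      have h1 := adj_of_smul_eq (htfix H hH) (e i) (e j)
      rw [hte i, hte j] at h1
      exact h1.symm
    have hstepk : ∀ (k : ℕ) (i j : ZMod (2 * n + 1)),
        H.Adj (e i) (e j) ↔ H.Adj (e (i + (k : ZMod (2 * n + 1)))) (e (j + k)) := by
      intro k
      induction k with
      | zero => intro i j; simp
      | succ k ih =>
        intro i j
        rw [ih i j, hstep1]
        rw [show i + ((k + 1 : ℕ) : ZMod (2 * n + 1)) = i + (k : ZMod (2 * n + 1)) + 1 by
              push_cast; ring,
          show j + ((k + 1 : ℕ) : ZMod (2 * n + 1)) = j + (k : ZMod (2 * n + 1)) + 1 by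
              push_cast; ring]
    intro i j
    have h1 := hstepk (-i).val i j
    rwa [hcv (-i), show i + -i = 0 by ring, show j + -i = j - i by ring] at h1
  have hSpair : ∀ H ∈ 𝓗, ∃ s : ZMod (2 * n + 1), IsUnit s ∧
      (∀ d, H.Adj (e 0) (e d) ↔ (d = s ∨ d = -s)) := by
    intro H hH
    obtain ⟨u1, u2, h12, hN⟩ := Set.ncard_eq_two.mp ((h.1 H hH).2 (e 0))
    obtain ⟨s, rfl⟩ := he.2 u1
    obtain ⟨s2, rfl⟩ := he.2 u2
    have hs_adj : H.Adj (e 0) (e s) := by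
      have h1 : e s ∈ H.neighborSet (e 0) := by rw [hN]; simp
      exact h1
    have hs2_adj : H.Adj (e 0) (e s2) := by
      have h1 : e s2 ∈ H.neighborSet (e 0) := by rw [hN]; simp
      exact h1
    have hchar' : ∀ d, H.Adj (e 0) (e d) ↔ (d = s ∨ d = s2) := by
      intro d
      constructor
      · intro hadj
        have h1 : e d ∈ H.neighborSet (e 0) := hadj
        rw [hN] at h1
        simp only [Set.mem_insert_iff, Set.mem_singleton_iff] at h1
        rcases h1 with h1 | h1
        · exact Or.inl (he.1 h1)
        · exact Or.inr (he.1 h1)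
      · rintro (rfl | rfl)
        · exact hs_adj
        · exact hs2_adj
    have hsym : ∀ d, H.Adj (e 0) (e d) → H.Adj (e 0) (e (-d)) := by
      intro d hadj
      have h1 := (hshift H hH d 0).mp hadj.symm
      rwa [zero_sub] at h1
    have hs0 : s ≠ 0 := by
      intro e0
      rw [e0] at hs_adj
      exact hs_adj.ne rfl
    have hmodd' : (2 * n + 1) % 2 = 1 := by omega
    have hs2eq : s2 = -s := by
      have h1 := hsym s hs_adj
      rcases (hchar' (-s)).mp h1 with h2' | h2'
      · exfalso
        have h3 : s + s = 0 := by linear_combination -h2'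
        exact hs0 (zmod_no_two_torsion hmodd' h3)
      · exact h2'.symm
    subst hs2eq
    have hps : ((2 * n + 1 : ℕ) : ZMod (2 * n + 1)) * s = 0 := by
      rw [ZMod.natCast_self, zero_mul]
    push_cast at hps
    have hclosed : ∀ v : V,
        v ∈ e '' (Set.range (fun k : ℕ => (k : ZMod (2 * n + 1)) * s)) := by
      apply hcs_closure_eq (h.1 H hH).1 (v0 := e 0)
      · exact ⟨0, ⟨0, by simp⟩, rfl⟩
      · rintro x y ⟨ξ, ⟨k, rfl⟩, rfl⟩ hxy
        obtain ⟨η, rfl⟩ := he.2 y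
        have h1 := (hshift H hH _ η).mp hxy
        rcases (hchar' (η - (k : ZMod (2 * n + 1)) * s)).mp h1 with h2' | h2'
        · refine ⟨η, ⟨k + 1, ?_⟩, rfl⟩
          push_cast
          linear_combination -h2'
        · refine ⟨η, ⟨k + 2 * n, ?_⟩, rfl⟩
          push_cast
          linear_combination -h2' + hps
    obtain ⟨k, hk⟩ : ∃ k : ℕ, (k : ZMod (2 * n + 1)) * s = 1 := by
      obtain ⟨ξ, ⟨k, rfl⟩, hval⟩ := hclosed (e 1)
      exact ⟨k, he.1 hval⟩
    have hunit : IsUnit s :=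
      IsUnit.of_mul_eq_one (k : ZMod (2 * n + 1)) (by linear_combination hk)
    exact ⟨s, hunit, hchar'⟩
  have hprime : (2 * n + 1).Prime := by
    by_contra hnp
    obtain ⟨q, hqd, hq2, hqlt⟩ := Nat.exists_dvd_of_not_prime2 (by omega) hnp
    have hqne : ((q : ℕ) : ZMod (2 * n + 1)) ≠ 0 := by
      rw [Ne, ZMod.natCast_eq_zero_iff]
      intro hdvd2
      have := Nat.le_of_dvd (by omega) hdvd2
      omega
    have hne' : e 0 ≠ e ((q : ℕ) : ZMod (2 * n + 1)) := fun hc => hqne (he.1 hc).symm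
    obtain ⟨H, ⟨hH, hadj⟩, _⟩ := hcs_cyc h hne'
    obtain ⟨s, hsu, hschar⟩ := hSpair H hH
    have hqunit : IsUnit ((q : ℕ) : ZMod (2 * n + 1)) := by
      rcases (hschar _).mp hadj with h1 | h1
      · rw [h1]; exact hsu
      · rw [h1]; exact hsu.neg
    have hcop := (ZMod.isUnit_iff_coprime q (2 * n + 1)).mp hqunit
    have hdq : q ∣ Nat.gcd q (2 * n + 1) := Nat.dvd_gcd dvd_rfl hqd
    rw [Nat.Coprime] at hcop
    rw [hcop] at hdq
    have := Nat.le_of_dvd one_pos hdq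
    omega
  refine ⟨hprime, ?_⟩
  haveI hfprime : Fact (Nat.Prime (2 * n + 1)) := ⟨hprime⟩
  set E : ZMod (2 * n + 1) ≃ V := Equiv.ofBijective e he with hEdef
  have hEapp : ∀ i, E i = e i := fun _ => rfl
  have hEsym : ∀ i, E.symm (e i) = i := fun i => Equiv.symm_apply_apply E i
  have hEsym' : ∀ v, e (E.symm v) = v := fun v => Equiv.apply_symm_apply E v
  let circ : ZMod (2 * n + 1) → SimpleGraph V := fun u =>
    { Adj := fun v w => v ≠ w ∧ (E.symm w - E.symm v = u ∨ E.symm w - E.symm v = -u)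
      symm := by
        constructor
        intro v w hx
        refine ⟨hx.1.symm, ?_⟩
        rcases hx.2 with h1 | h1
        · right; linear_combination -h1
        · left; linear_combination -h1
      loopless := ⟨fun v hx => hx.1 rfl⟩ }
  have hcirc_adj : ∀ u v w, (circ u).Adj v w ↔
      (v ≠ w ∧ (E.symm w - E.symm v = u ∨ E.symm w - E.symm v = -u)) := fun u v w => Iff.rfl
  have hadjH : ∀ H ∈ 𝓗, ∀ (s : ZMod (2 * n + 1)),
      (∀ d, H.Adj (e 0) (e d) ↔ (d = s ∨ d = -s)) →
      ∀ v w, H.Adj v w ↔ (E.symm w - E.symm v = s ∨ E.symm w - E.symm v = -s) := by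
    intro H hH s hs v w
    have hv : v = e (E.symm v) := (hEsym' v).symm
    have hw : w = e (E.symm w) := (hEsym' w).symm
    rw [hv, hw, hshift H hH (E.symm v) (E.symm w), hs (E.symm w - E.symm v), hEsym, hEsym]
  have hcircmem : ∀ H ∈ 𝓗, ∃ s, IsUnit s ∧ H = circ s := by
    intro H hH
    obtain ⟨s, hsu, hschar⟩ := hSpair H hH
    refine ⟨s, hsu, ?_⟩
    ext v w
    rw [hcirc_adj, hadjH H hH s hschar v w]
    constructor
    · intro h1
      refine ⟨?_, h1⟩
      intro hvw
      subst hvw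
      have hs0 : s ≠ 0 := hsu.ne_zero
      rcases h1 with h2' | h2'
      · rw [sub_self] at h2'; exact hs0 h2'.symm
      · rw [sub_self] at h2'
        have h3 : s = 0 := by linear_combination h2'
        exact hs0 h3
    · rintro ⟨_, h1⟩; exact h1
  have hcircmem' : ∀ u : ZMod (2 * n + 1), u ≠ 0 → circ u ∈ 𝓗 := by
    intro u hu
    have hne' : e 0 ≠ e u := fun hc => hu (he.1 hc).symm
    obtain ⟨H, ⟨hH, hadj⟩, _⟩ := hcs_cyc h hne'
    obtain ⟨s, hsu, hschar⟩ := hSpair H hH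
    have hus : u = s ∨ u = -s := (hschar u).mp hadj
    have hiff : ∀ d : ZMod (2 * n + 1), (d = u ∨ d = -u) ↔ (d = s ∨ d = -s) := by
      intro d
      rcases hus with rfl | rfl
      · exact Iff.rfl
      · rw [neg_neg]; exact or_comm
    have hcu : circ u = H := by
      ext v w
      rw [hcirc_adj, hadjH H hH s hschar v w]
      constructor
      · rintro ⟨_, hd⟩
        exact (hiff _).mp hd
      · intro hd
        refine ⟨?_, (hiff _).mpr hd⟩
        intro hvw
        subst hvw
        rcases hd with h2' | h2'
        · rw [sub_self] at h2'
          exact hsu.ne_zero h2'.symm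
        · rw [sub_self] at h2'
          have h3 : s = 0 := by linear_combination h2'
          exact hsu.ne_zero h3
    rw [hcu]
    exact hH
  have hAform : ∀ (A : ZMod (2 * n + 1) ≃ᵃ[ZMod (2 * n + 1)] ZMod (2 * n + 1))
      (x : ZMod (2 * n + 1)), A x = (A 1 - A 0) * x + A 0 := by
    intro A x
    have hd : ∀ y, A y = A.linear y + A 0 := by
      intro y
      have h1 := congrFun (AffineMap.decomp (A : ZMod (2 * n + 1) →ᵃ[ZMod (2 * n + 1)]
        ZMod (2 * n + 1))) y
      simpa using h1
    have hl : ∀ y : ZMod (2 * n + 1), A.linear y = y * A.linear 1 := by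
      intro y
      calc A.linear y = A.linear (y • 1) := by rw [smul_eq_mul, mul_one]
      _ = y • A.linear 1 := map_smul _ y 1
      _ = y * A.linear 1 := by rw [smul_eq_mul]
    have h1 : A.linear 1 = A 1 - A 0 := by rw [hd 1]; ring
    rw [hd x, hl x, h1]; ring
  have hAunit : ∀ (A : ZMod (2 * n + 1) ≃ᵃ[ZMod (2 * n + 1)] ZMod (2 * n + 1)),
      A 1 - A 0 ≠ 0 := by
    intro A hzero
    have h1 : A 1 = A 0 := sub_eq_zero.mp hzero
    exact one_ne_zero (A.toEquiv.injective h1)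
  let permOf : (ZMod (2 * n + 1) ≃ᵃ[ZMod (2 * n + 1)] ZMod (2 * n + 1)) → Equiv.Perm V :=
    fun A => (E.symm.trans A.toEquiv).trans E
  have hpermapp : ∀ A v, permOf A v = E (A (E.symm v)) := fun A v => rfl
  have hpermmul : ∀ A B, permOf (A * B) = permOf A * permOf B := by
    intro A B
    ext v
    rw [Equiv.Perm.mul_apply, hpermapp, hpermapp, hpermapp, Equiv.symm_apply_apply]
    rfl
  let Ψ0 : (ZMod (2 * n + 1) ≃ᵃ[ZMod (2 * n + 1)] ZMod (2 * n + 1)) →* Equiv.Perm V :=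
    MonoidHom.mk' permOf hpermmul
  have hΨ0app : ∀ A, Ψ0 A = permOf A := fun _ => rfl
  have hperminv : ∀ A, (permOf A)⁻¹ = permOf A⁻¹ := by
    intro A
    have h1 := map_inv Ψ0 A
    rw [hΨ0app, hΨ0app] at h1
    exact h1.symm
  have hmem : ∀ A, permOf A ∈ autHCS 𝓗 := by
    have hsub : ∀ A, ∀ H ∈ 𝓗, (permOf A) • H ∈ 𝓗 := by
      intro A H hH
      obtain ⟨s, hsu, rfl⟩ := hcircmem H hH
      have hform : (permOf A) • circ s = circ ((A 1 - A 0) * s) := by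
        have hinvapp : ∀ z : V, (permOf A)⁻¹ z = E (A⁻¹ (E.symm z)) := by
          intro z
          rw [hperminv, hpermapp]
        have hdiff : ∀ x y : ZMod (2 * n + 1), A⁻¹ x - A⁻¹ y = (A⁻¹ 1 - A⁻¹ 0) * (x - y) := by
          intro x y; rw [hAform A⁻¹ x, hAform A⁻¹ y]; ring
        have hAAinv : ∀ x, A⁻¹ (A x) = x := by
          intro x
          have h1 : A⁻¹ (A x) = (A⁻¹ * A) x := rfl
          rw [h1, inv_mul_cancel A]
          rfl
        have hαα : (A 1 - A 0) * (A⁻¹ 1 - A⁻¹ 0) = 1 := by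
          have h2' : A⁻¹ (A 1) - A⁻¹ (A 0) = 1 := by rw [hAAinv, hAAinv]; ring
          rw [hdiff (A 1) (A 0)] at h2'
          linear_combination h2'
        ext v w
        rw [hcs_smul_adj, hcirc_adj, hcirc_adj, hinvapp v, hinvapp w, Equiv.symm_apply_apply,
          Equiv.symm_apply_apply]
        constructor
        · rintro ⟨hne'', hd⟩
          refine ⟨?_, ?_⟩
          · intro hvw
            exact hne'' (by rw [hvw])
          · rcases hd with h1 | h1
            · left
              rw [hdiff] at h1
              linear_combination (A 1 - A 0) * h1 - (E.symm w - E.symm v) * hαα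
            · right
              rw [hdiff] at h1
              linear_combination (A 1 - A 0) * h1 - (E.symm w - E.symm v) * hαα
        · rintro ⟨hne'', hd⟩
          refine ⟨?_, ?_⟩
          · intro hvw
            apply hne''
            have h1 : (E (A⁻¹ (E.symm v))) = (E (A⁻¹ (E.symm w))) := hvw
            have h2' := A⁻¹.toEquiv.injective (E.injective h1)
            exact E.symm.injective h2'
          · rcases hd with h1 | h1
            · left
              rw [hdiff]
              linear_combination (A⁻¹ 1 - A⁻¹ 0) * h1 + s * hαα
            · right
              rw [hdiff]
              linear_combination (A⁻¹ 1 - A⁻¹ 0) * h1 - s * hαα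
      rw [hform]
      exact hcircmem' _ (mul_ne_zero (hAunit A) hsu.ne_zero)
    intro A
    rw [autHCS, MulAction.mem_stabilizer_iff]
    ext K
    rw [Set.mem_smul_set_iff_inv_smul_mem]
    constructor
    · intro hKm
      have h1 : permOf A • ((permOf A)⁻¹ • K) ∈ 𝓗 := hsub A _ hKm
      rwa [smul_inv_smul] at h1
    · intro hKm
      rw [hperminv]
      exact hsub A⁻¹ K hKm
  let Ψ : (ZMod (2 * n + 1) ≃ᵃ[ZMod (2 * n + 1)] ZMod (2 * n + 1)) →* ↥(autHCS 𝓗) :=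
    Ψ0.codRestrict (autHCS 𝓗) hmem
  have hΨinj : Function.Injective Ψ := by
    intro A B hAB
    have h1 : permOf A = permOf B := congrArg Subtype.val hAB
    apply AffineEquiv.ext
    intro x
    have h2' : permOf A (E x) = permOf B (E x) := by rw [h1]
    rw [hpermapp, hpermapp, Equiv.symm_apply_apply] at h2'
    exact E.injective h2'
  have hΨsurj : Function.Surjective Ψ := by
    rintro ⟨g, hg⟩
    have hβγ : E.symm (g (E 1)) ≠ E.symm (g (E 0)) := by
      intro hc
      have h1 := E.injective (g.injective (E.symm.injective hc))
      exact one_ne_zero h1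
    set β : ZMod (2 * n + 1) := E.symm (g (E 0)) with hβ
    set α : ZMod (2 * n + 1) := E.symm (g (E 1)) - β with hα'
    have hα0 : α ≠ 0 := sub_ne_zero.mpr hβγ
    let lin : ZMod (2 * n + 1) ≃ₗ[ZMod (2 * n + 1)] ZMod (2 * n + 1) :=
      LinearEquiv.smulOfNeZero _ _ α hα0
    have hlin : ∀ x, lin x = α * x := fun x => rfl
    let A : ZMod (2 * n + 1) ≃ᵃ[ZMod (2 * n + 1)] ZMod (2 * n + 1) :=
      AffineEquiv.mk' (fun x => α * x + β) lin 0 (by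
        intro p'
        show α * p' + β = lin (p' -ᵥ 0) +ᵥ (α * 0 + β)
        rw [vsub_eq_sub, sub_zero, vadd_eq_add, hlin]
        ring)
    have hAapp : ∀ x, A x = α * x + β := fun x => rfl
    refine ⟨A, ?_⟩
    have hd2 : ((permOf A)⁻¹ * g) ∈ autHCS 𝓗 :=
      Subgroup.mul_mem _ (Subgroup.inv_mem _ (hmem A)) hg
    have hfix0 : ((permOf A)⁻¹ * g) (E 0) = E 0 := by
      show (permOf A)⁻¹ (g (E 0)) = E 0
      have h1 : permOf A (E 0) = g (E 0) := by
        rw [hpermapp, Equiv.symm_apply_apply, hAapp]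
        rw [show α * 0 + β = β by ring, hβ, Equiv.apply_symm_apply]
      rw [← h1, Equiv.Perm.inv_def, Equiv.symm_apply_apply]
    have hfix1 : ((permOf A)⁻¹ * g) (E 1) = E 1 := by
      show (permOf A)⁻¹ (g (E 1)) = E 1
      have h1 : permOf A (E 1) = g (E 1) := by
        rw [hpermapp, Equiv.symm_apply_apply, hAapp]
        have h2' : α * 1 + β = E.symm (g (E 1)) := by rw [hα']; ring
        rw [h2', Equiv.apply_symm_apply]
      rw [← h1, Equiv.Perm.inv_def, Equiv.symm_apply_apply]
    have hneq : E 0 ≠ E 1 := by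
      intro hc
      exact zero_ne_one (E.injective hc)
    have hone := hcs_fix_two h hd2 hneq hfix0 hfix1
    have hfinal : permOf A = g := inv_mul_eq_one.mp hone
    exact Subtype.ext hfinal
  exact ⟨(MulEquiv.ofBijective Ψ ⟨hΨinj, hΨsurj⟩).symm⟩
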